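/- Let Γ be an energy game arena with least energy progress measure f*. If a function f : V → N is reachable from the constant-0 function by a finite sequence of lifts at violating vertices (f_{j+1} = δ(f_j, v_j) with f_j violating the EPM local condition at v_j) and f itself violates the EPM local condition at no vertex (i.e., f is an energy progress measure), then f = f*. Hence any maximal lifting sequence starting from 0 that terminates computes the least energy progress measure. -/

import Mathlib

open scoped Classical
noncomputable section

/-- An energy game arena: vertices `V`, edge relation `E`, integer weights `w`,
player-0 vertices `P0` (player 1 owns the rest), every vertex has a successor. -/
structure Arena (V : Type) where
  E : V → V → Prop
  w : V → V → ℤ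
  P0 : V → Prop
  total : ∀ v, ∃ v', E v v'

variable {V : Type}

/-- `ρ` is a play (infinite path) starting at `v`. -/
def IsPlay (A : Arena V) (v : V) (ρ : ℕ → V) : Prop :=
  ρ 0 = v ∧ ∀ i, A.E (ρ i) (ρ (i + 1))

/-- A memoryless strategy for player 0. -/
def Strategy0 (A : Arena V) (σ : V → V) : Prop :=
  ∀ v, A.P0 v → A.E v (σ v)

/-- A memoryless strategy for player 1. -/
def Strategy1 (A : Arena V) (σ : V → V) : Prop :=
  ∀ v, ¬ A.P0 v → A.E v (σ v)

/-- The play `ρ` is consistent with the player-0 strategy `σ`. -/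
def Consistent0 (A : Arena V) (σ : V → V) (ρ : ℕ → V) : Prop :=
  ∀ j, A.P0 (ρ j) → ρ (j + 1) = σ (ρ j)

/-- The play `ρ` is consistent with the player-1 strategy `σ`. -/
def Consistent1 (A : Arena V) (σ : V → V) (ρ : ℕ → V) : Prop :=
  ∀ j, ¬ A.P0 (ρ j) → ρ (j + 1) = σ (ρ j)

/-- Energy level of the prefix `ρ 0 … ρ j` with initial credit `c`. -/
def energy (A : Arena V) (c : ℕ) (ρ : ℕ → V) (j : ℕ) : ℤ :=
  (c : ℤ) + ∑ i ∈ Finset.range j, A.w (ρ i) (ρ (i + 1))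

/-- The player-0 strategy `σ` is winning from `v` with initial credit `c`. -/
def WinningFrom (A : Arena V) (σ : V → V) (v : V) (c : ℕ) : Prop :=
  ∀ ρ : ℕ → V, IsPlay A v ρ → Consistent0 A σ ρ → ∀ j, 0 ≤ energy A c ρ j

/-- Winning region of player 0. -/
def W0 (A : Arena V) : Set V :=
  {v | ∃ σ : V → V, Strategy0 A σ ∧ ∃ c : ℕ, WinningFrom A σ v c}

/-- `a ⊖ b = max (0, a - b)`, with `⊤ ⊖ b = ⊤`. -/
def osub (a : ℕ∞) (b : ℤ) : ℕ∞ :=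
  a.map (fun n : ℕ => ((n : ℤ) - b).toNat)

/-- Energy progress measure. -/
def IsEPM (A : Arena V) (f : V → ℕ∞) : Prop :=
  (∀ v, A.P0 v → ∃ v', A.E v v' ∧ osub (f v') (A.w v v') ≤ f v) ∧
  (∀ v, ¬ A.P0 v → ∀ v', A.E v v' → osub (f v') (A.w v v') ≤ f v)

/-- New value at `v` computed by the lifting operator. -/
def liftVal (A : Arena V) (f : V → ℕ∞) (v : V) : ℕ∞ :=
  if A.P0 v then sInf {x : ℕ∞ | ∃ v', A.E v v' ∧ x = osub (f v') (A.w v v')}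
  else sSup {x : ℕ∞ | ∃ v', A.E v v' ∧ x = osub (f v') (A.w v v')}

/-- The lifting operator `δ(·, v)`. -/
def liftOp (A : Arena V) (f : V → ℕ∞) (v : V) : V → ℕ∞ :=
  fun u => if u = v then liftVal A f v else f u

/-- `f` violates the EPM local condition at `v`. -/
def Violates (A : Arena V) (f : V → ℕ∞) (v : V) : Prop :=
  (A.P0 v ∧ ∀ v', A.E v v' → f v < osub (f v') (A.w v v')) ∨
  (¬ A.P0 v ∧ ∃ v', A.E v v' ∧ f v < osub (f v') (A.w v v'))

/-- `M_Γ = Σ_{v∈V} max({0} ∪ {−w(v,v') : (v,v') ∈ E})`. -/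
def MGamma (A : Arena V) [Fintype V] : ℕ :=
  ∑ v : V, (Finset.univ.filter (fun v' => A.E v v')).sup (fun v' => (-(A.w v v')).toNat)

lemma osub_mono' {a b : ℕ∞} (c : ℤ) (h : a ≤ b) : osub a c ≤ osub b c := by
  cases a with
  | top =>
    cases b with
    | top => exact le_rfl
    | coe n => exact absurd h (by simp)
  | coe m =>
    cases b with
    | top => exact le_top
    | coe n =>
      have hmn : m ≤ n := by exact_mod_cast h
      show (((((m:ℤ) - c).toNat : ℕ) : ℕ∞)) ≤ ((((n:ℤ) - c).toNat : ℕ) : ℕ∞)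
      exact WithTop.coe_le_coe.mpr
        (Int.toNat_le_toNat (sub_le_sub_right (Int.ofNat_le.mpr hmn) c))

lemma notViolates_epm {V : Type} (A : Arena V) (f : V → ℕ∞)
    (h : ∀ u, ¬ Violates A f u) : IsEPM A f := by
  constructor
  · intro v hv
    have := h v
    simp only [Violates, not_or, not_and] at this
    have h1 := this.1 hv
    push_neg at h1
    obtain ⟨v', he, hle⟩ := h1
    exact ⟨v', he, hle⟩
  · intro v hv v' he
    have := h v
    simp only [Violates, not_or, not_and] at this
    have h2 := this.2 hv
    push_neg at h2
    exact h2 v' he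

/-- If a function reachable from the constant-0 function by lifts at violating vertices
violates the EPM local condition at no vertex, then it equals the least EPM: any
terminating maximal lifting sequence from 0 computes the least energy progress measure. -/
theorem stmt12 {V : Type} [Fintype V] [Nonempty V] (A : Arena V)
    (fstar : V → ℕ∞) (hEPM : IsEPM A fstar)
    (hleast : ∀ f : V → ℕ∞, IsEPM A f → ∀ v, fstar v ≤ f v)
    (k : ℕ) (F : ℕ → V → ℕ∞) (vs : ℕ → V)
    (h0 : F 0 = fun _ => 0)
    (hstep : ∀ j < k, Violates A (F j) (vs j) ∧ F (j + 1) = liftOp A (F j) (vs j))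
    (hterm : ∀ u, ¬ Violates A (F k) u) :
    F k = fstar := by
  have hepm : IsEPM A (F k) := notViolates_epm A (F k) hterm
  -- F j ≤ fstar by induction
  have hle : ∀ j ≤ k, ∀ v, F j v ≤ fstar v := by
    intro j hj
    induction j with
    | zero => intro v; simp [h0]
    | succ n ih =>
      have hnk : n < k := Nat.lt_of_succ_le hj
      have ihn := ih (le_of_lt hnk)
      obtain ⟨hviol, heq⟩ := hstep n hnk
      intro v
      rw [heq]
      unfold liftOp
      by_cases hv : v = vs n
      · rw [if_pos hv, hv]
        unfold liftVal
        by_cases hp : A.P0 (vs n)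
        · rw [if_pos hp]
          obtain ⟨v', he, hle'⟩ := hEPM.1 (vs n) hp
          calc sInf {x : ℕ∞ | ∃ v'', A.E (vs n) v'' ∧ x = osub (F n v'') (A.w (vs n) v'')}
              ≤ osub (F n v') (A.w (vs n) v') := sInf_le ⟨v', he, rfl⟩
            _ ≤ osub (fstar v') (A.w (vs n) v') := osub_mono' _ (ihn v')
            _ ≤ fstar (vs n) := hle'
        · rw [if_neg hp]
          apply sSup_le
          rintro x ⟨v', he, rfl⟩
          calc osub (F n v') (A.w (vs n) v') ≤ osub (fstar v') (A.w (vs n) v') :=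
                osub_mono' _ (ihn v')
            _ ≤ fstar (vs n) := hEPM.2 (vs n) hp v' he
      · rw [if_neg hv]; exact ihn v
  funext v
  exact le_antisymm (hle k le_rfl v) (hleast (F k) hepm v)
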